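/- arXiv:2605.29467 — 3 statements merged into one kernel-verified Lean document; each statement's English description precedes it below -/
import Mathlib

section
/- Let α > 0 and β > 0, and let μ be the Gamma distribution on ℝ with shape α and rate β. Then the pushforward of μ under the logarithm map x ↦ log(x) (defined on (0,∞), which carries all of μ's mass) is absolutely continuous with respect to Lebesgue measure on ℝ, with density z ↦ (β^α / Γ(α)) · exp(α·z − β·exp(z)). This is the belief-propagation message through the exponential link factor in the backward direction: it is the log-gamma distribution with parameters (β⁻¹, α). -/
open MeasureTheory ProbabilityTheory Real

/-- The pushforward of the Gamma distribution with shape `α > 0` and rate `β > 0` under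
`x ↦ log x` is absolutely continuous w.r.t. Lebesgue measure on `ℝ`, with density
`z ↦ (β^α / Γ(α)) · exp(α z − β e^z)` (the log-gamma distribution with parameters `(β⁻¹, α)`). -/
theorem log_pushforward_gamma_is_loggamma (α β : ℝ) (hα : 0 < α) (hβ : 0 < β) :
    Measure.map Real.log (gammaMeasure α β) =
      volume.withDensity (fun z : ℝ => ENNReal.ofReal
        (β ^ α / Real.Gamma α * Real.exp (α * z - β * Real.exp z))) := by
  ext s hs
  rw [Measure.map_apply Real.measurable_log hs, withDensity_apply _ hs]
  rw [show gammaMeasure α β = volume.withDensity (gammaPDF α β) from rfl,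
    withDensity_apply _ (hs.preimage Real.measurable_log)]
  -- replace the pdf by its indicator version on `Ioi 0`
  have h_ae : gammaPDF α β =ᵐ[volume] (Set.Ioi (0:ℝ)).indicator (gammaPDF α β) := by
    have h0 : ∀ᵐ (x : ℝ), x ≠ 0 := by
      rw [ae_iff]
      simp [Real.volume_singleton]
    filter_upwards [h0] with x hx
    rcases lt_or_gt_of_ne hx with h | h
    · rw [gammaPDF_of_neg h, Set.indicator_of_notMem (by simp [h.le, not_lt.2 h.le])]
    · rw [Set.indicator_of_mem (Set.mem_Ioi.2 h)]
  rw [lintegral_congr_ae (ae_restrict_of_ae h_ae), lintegral_indicator (measurableSet_Ioi),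
    Measure.restrict_restrict measurableSet_Ioi]
  have himg : Set.Ioi 0 ∩ Real.log ⁻¹' s = Real.exp '' s := by
    ext x
    constructor
    · rintro ⟨hx0, hxs⟩
      exact ⟨Real.log x, hxs, Real.exp_log hx0⟩
    · rintro ⟨z, hz, rfl⟩
      exact ⟨Real.exp_pos z, by simpa [Real.log_exp] using hz⟩
  rw [himg]
  have hder : ∀ x ∈ s, HasFDerivWithinAt Real.exp
      ((1 : ℝ →L[ℝ] ℝ).smulRight (Real.exp x)) s x := fun x _ =>
    (Real.hasDerivAt_exp x).hasFDerivAt.hasFDerivWithinAt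
  rw [lintegral_image_eq_lintegral_abs_det_fderiv_mul volume hs hder
    (Real.exp_injective.injOn) (gammaPDF α β)]
  refine setLIntegral_congr_fun hs (fun z _ => ?_)
  rw [ContinuousLinearMap.smulRight_one_eq_toSpanSingleton, ContinuousLinearMap.det_toSpanSingleton, abs_of_pos (Real.exp_pos z),
    gammaPDF_of_nonneg (Real.exp_pos z).le,
    ← ENNReal.ofReal_mul (Real.exp_pos z).le]
  congr 1
  have h1 : Real.exp z ^ (α - 1) = Real.exp (z * (α - 1)) := by
    rw [Real.rpow_def_of_pos (Real.exp_pos z), Real.log_exp]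
  have h2 : α * z - β * Real.exp z = z + (z * (α - 1) + -(β * Real.exp z)) := by ring
  rw [h1, h2, Real.exp_add, Real.exp_add]
  ring
end

section
/- Let α > 0 and β > 0, and let X be a random variable with the Gamma distribution of shape α and rate β. Then E[(log X)²] = ψ′(α) + (ψ(α) − log β)², where ψ(α) = (d/dt log Γ(t))|_{t=α} is the digamma function and ψ′(α) = (d²/dt² log Γ(t))|_{t=α} is the trigamma function. Equivalently, Var(log X) = ψ′(α) and E[log X] = ψ(α) − log β. -/
open Real MeasureTheory ProbabilityTheory
open Set Filter Asymptotics
open scoped Topology NNReal ENNReal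

namespace GammaLogAux

noncomputable def fE (r : ℝ) : ℝ → ℂ := fun x => ((Real.exp (-(r * x)) : ℝ) : ℂ)
noncomputable def fL (r : ℝ) : ℝ → ℂ := fun x => Real.log x • fE r x
noncomputable def fQ (r : ℝ) : ℝ → ℂ := fun x => Real.log x • fL r x

noncomputable def G (r t : ℝ) : ℝ := ∫ x in Ioi (0:ℝ), x ^ (t - 1) * Real.exp (-(r * x))
noncomputable def L (r t : ℝ) : ℝ :=
  ∫ x in Ioi (0:ℝ), x ^ (t - 1) * (Real.log x * Real.exp (-(r * x)))
noncomputable def Q (r t : ℝ) : ℝ :=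
  ∫ x in Ioi (0:ℝ), x ^ (t - 1) * (Real.log x * (Real.log x * Real.exp (-(r * x))))

lemma mellin_ofReal (g : ℝ → ℝ) (t : ℝ) :
    mellin (fun x : ℝ => ((g x : ℝ) : ℂ)) (t : ℂ) =
      ((∫ x in Ioi (0:ℝ), x ^ (t - 1) * g x : ℝ) : ℂ) := by
  have hco : ∀ r : ℝ, Complex.ofReal r = @RCLike.ofReal ℂ _ r := fun r => rfl
  rw [mellin]
  conv_rhs => rw [hco, ← _root_.integral_ofReal]
  refine setIntegral_congr_fun measurableSet_Ioi fun x hx => ?_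
  conv_rhs => rw [← hco]
  rw [Complex.ofReal_mul, show ((t:ℂ) - 1) = ((t - 1 : ℝ) : ℂ) by push_cast; ring,
    ← Complex.ofReal_cpow hx.le, smul_eq_mul]

lemma fE_top {r : ℝ} (hr : 0 < r) (a : ℝ) : fE r =O[atTop] (· ^ (-a) : ℝ → ℝ) := by
  rw [← isBigO_norm_left]
  simp_rw [fE, Complex.norm_real, isBigO_norm_left]
  simpa only [neg_mul] using (isLittleO_exp_neg_mul_rpow_atTop hr (-a)).isBigO

lemma fE_bot (r : ℝ) : fE r =O[𝓝[>] (0:ℝ)] (· ^ (-(0:ℝ)) : ℝ → ℝ) := by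
  simp_rw [neg_zero, Real.rpow_zero]
  refine isBigO_const_of_tendsto (?_ : Tendsto _ _ (𝓝 (1 : ℂ))) one_ne_zero
  have h : Continuous (fE r) := by unfold fE; fun_prop
  have := (h.tendsto 0).mono_left (nhdsWithin_le_nhds (s := Ioi (0:ℝ)))
  simpa [fE] using this

lemma fE_loc (r : ℝ) : LocallyIntegrableOn (fE r) (Ioi (0:ℝ)) := by
  have h : Continuous (fE r) := by unfold fE; fun_prop
  exact (h.continuousOn).locallyIntegrableOn measurableSet_Ioi

lemma fL_loc (r : ℝ) : LocallyIntegrableOn (fL r) (Ioi (0:ℝ)) := by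
  have h : ContinuousOn (fL r) (Ioi (0:ℝ)) := by
    show ContinuousOn (Real.log • fE r) (Ioi (0:ℝ))
    apply ContinuousOn.smul
    · exact Real.continuousOn_log.mono fun x hx => ne_of_gt hx
    · exact (by unfold fE; fun_prop : Continuous (fE r)).continuousOn
  exact h.locallyIntegrableOn measurableSet_Ioi

lemma step1 {r : ℝ} (hr : 0 < r) {t : ℝ} (ht : 0 < t) :
    MellinConvergent (fL r) (t : ℂ) ∧
      HasDerivAt (mellin (fE r)) (mellin (fL r) (t : ℂ)) (t : ℂ) := by
  have := mellin_hasDerivAt_of_isBigO_rpow (f := fE r) (s := (t : ℂ)) (a := t + 1) (b := 0)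
    (fE_loc r) (fE_top hr _) (by simp only [Complex.ofReal_re]; linarith) (fE_bot r) (by simpa using ht)
  exact this

lemma step2 {r : ℝ} (hr : 0 < r) {t : ℝ} (ht : 0 < t) :
    MellinConvergent (fQ r) (t : ℂ) ∧
      HasDerivAt (mellin (fL r)) (mellin (fQ r) (t : ℂ)) (t : ℂ) := by
  have h := mellin_hasDerivAt_of_isBigO_rpow (f := fL r) (s := (t : ℂ)) (a := t + 1) (b := t / 2)
    (fL_loc r)
    (isBigO_rpow_top_log_smul (by linarith : t + 1 < t + 2) (fE_top hr _))
    (by simp only [Complex.ofReal_re]; linarith)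
    (isBigO_rpow_zero_log_smul (by linarith : (0:ℝ) < t / 2) (fE_bot r))
    (by simpa using by linarith : t / 2 < (t:ℂ).re)
  exact h
lemma fE_eq (r : ℝ) : fE r = fun x : ℝ => ((Real.exp (-(r * x)) : ℝ) : ℂ) := rfl

lemma fL_eq (r : ℝ) : fL r = fun x : ℝ => ((Real.log x * Real.exp (-(r * x)) : ℝ) : ℂ) := by
  funext x; simp [fL, fE, Complex.real_smul]

lemma fQ_eq (r : ℝ) :
    fQ r = fun x : ℝ => ((Real.log x * (Real.log x * Real.exp (-(r * x))) : ℝ) : ℂ) := by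
  funext x; simp [fQ, fL, fE, Complex.real_smul]

lemma mellin_fE (r t : ℝ) : mellin (fE r) (t : ℂ) = ((G r t : ℝ) : ℂ) := by
  rw [fE_eq]; exact mellin_ofReal _ t

lemma mellin_fL (r t : ℝ) : mellin (fL r) (t : ℂ) = ((L r t : ℝ) : ℂ) := by
  rw [fL_eq]; exact mellin_ofReal _ t

lemma mellin_fQ (r t : ℝ) : mellin (fQ r) (t : ℂ) = ((Q r t : ℝ) : ℂ) := by
  rw [fQ_eq]; exact mellin_ofReal _ t

lemma hasDerivAt_G {r : ℝ} (hr : 0 < r) {t : ℝ} (ht : 0 < t) :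
    HasDerivAt (G r) (L r t) t := by
  have h := ((step1 hr ht).2).real_of_complex
  simp only [mellin_fE, mellin_fL, Complex.ofReal_re] at h
  exact h

lemma hasDerivAt_L {r : ℝ} (hr : 0 < r) {t : ℝ} (ht : 0 < t) :
    HasDerivAt (L r) (Q r t) t := by
  have h := ((step2 hr ht).2).real_of_complex
  simp only [mellin_fL, mellin_fQ, Complex.ofReal_re] at h
  exact h

lemma integrableOn_of_mellinConvergent {g : ℝ → ℝ} {t : ℝ}
    (h : MellinConvergent (fun x : ℝ => ((g x : ℝ) : ℂ)) (t : ℂ)) :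
    IntegrableOn (fun x : ℝ => x ^ (t - 1) * g x) (Ioi (0:ℝ)) := by
  have h1 : IntegrableOn (fun x : ℝ => (x:ℂ) ^ ((t:ℂ) - 1) • ((g x : ℝ) : ℂ)) (Ioi (0:ℝ)) := h
  have h2 : Integrable (fun x : ℝ => ((x:ℂ) ^ ((t:ℂ) - 1) • ((g x : ℝ) : ℂ)).re)
      (volume.restrict (Ioi (0:ℝ))) := h1.re
  refine h2.congr ?_
  filter_upwards [ae_restrict_mem measurableSet_Ioi] with x hx
  rw [show ((t:ℂ) - 1) = ((t - 1 : ℝ) : ℂ) by push_cast; ring, ← Complex.ofReal_cpow hx.le,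
    smul_eq_mul, ← Complex.ofReal_mul, Complex.ofReal_re]

lemma integrableOn_L {r : ℝ} (hr : 0 < r) {t : ℝ} (ht : 0 < t) :
    IntegrableOn (fun x : ℝ => x ^ (t - 1) * (Real.log x * Real.exp (-(r * x)))) (Ioi (0:ℝ)) := by
  apply integrableOn_of_mellinConvergent
  rw [← fL_eq]; exact (step1 hr ht).1

lemma integrableOn_Q {r : ℝ} (hr : 0 < r) {t : ℝ} (ht : 0 < t) :
    IntegrableOn (fun x : ℝ => x ^ (t - 1) * (Real.log x * (Real.log x * Real.exp (-(r * x)))))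
      (Ioi (0:ℝ)) := by
  apply integrableOn_of_mellinConvergent
  rw [← fQ_eq]; exact (step2 hr ht).1

lemma G_eq {r : ℝ} (hr : 0 < r) {t : ℝ} (ht : 0 < t) :
    G r t = (1 / r) ^ t * Real.Gamma t :=
  integral_rpow_mul_exp_neg_mul_Ioi ht hr

lemma G_one_eventuallyEq {t : ℝ} (ht : 0 < t) : G 1 =ᶠ[𝓝 t] Real.Gamma := by
  filter_upwards [Ioi_mem_nhds ht] with u hu
  rw [G_eq one_pos hu]; norm_num

lemma hasDerivAt_Gamma {t : ℝ} (ht : 0 < t) : HasDerivAt Real.Gamma (L 1 t) t :=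
  (hasDerivAt_G one_pos ht).congr_of_eventuallyEq (G_one_eventuallyEq ht).symm

lemma hasDerivAt_logGamma {t : ℝ} (ht : 0 < t) :
    HasDerivAt (fun u => Real.log (Real.Gamma u)) (L 1 t / Real.Gamma t) t :=
  (hasDerivAt_Gamma ht).log (Real.Gamma_pos_of_pos ht).ne'

lemma deriv_logGamma {t : ℝ} (ht : 0 < t) :
    deriv (fun u => Real.log (Real.Gamma u)) t = L 1 t / Real.Gamma t :=
  (hasDerivAt_logGamma ht).deriv

lemma deriv2_logGamma {t : ℝ} (ht : 0 < t) :
    deriv (deriv (fun u => Real.log (Real.Gamma u))) t =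
      (Q 1 t * Real.Gamma t - L 1 t * L 1 t) / Real.Gamma t ^ 2 := by
  have hev : deriv (fun u => Real.log (Real.Gamma u)) =ᶠ[𝓝 t]
      fun u => L 1 u / Real.Gamma u := by
    filter_upwards [Ioi_mem_nhds ht] with u hu
    exact deriv_logGamma hu
  rw [hev.deriv_eq]
  exact ((hasDerivAt_L one_pos ht).div (hasDerivAt_Gamma ht)
    (Real.Gamma_pos_of_pos ht).ne').deriv

lemma const_rpow_hasDerivAt {r : ℝ} (hr : 0 < r) (t : ℝ) :
    HasDerivAt (fun u : ℝ => (1 / r) ^ u) (-Real.log r * (1 / r) ^ t) t := by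
  have h := Real.hasStrictDerivAt_const_rpow (show (0:ℝ) < 1 / r by positivity) t
  have := h.hasDerivAt
  rw [Real.log_div one_ne_zero hr.ne', Real.log_one, zero_sub] at this
  rw [mul_comm]; exact this

lemma L_scaled {r : ℝ} (hr : 0 < r) {t : ℝ} (ht : 0 < t) :
    L r t = (1 / r) ^ t * (L 1 t - Real.log r * Real.Gamma t) := by
  have h1 : HasDerivAt (fun u => (1 / r) ^ u * Real.Gamma u) (L r t) t := by
    refine (hasDerivAt_G hr ht).congr_of_eventuallyEq ?_
    filter_upwards [Ioi_mem_nhds ht] with u hu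
    exact (G_eq hr hu).symm
  have h2 : HasDerivAt (fun u => (1 / r) ^ u * Real.Gamma u)
      (-Real.log r * (1 / r) ^ t * Real.Gamma t + (1 / r) ^ t * L 1 t) t :=
    (const_rpow_hasDerivAt hr t).mul (hasDerivAt_Gamma ht)
  have := h1.unique h2
  rw [this]; ring

lemma Q_scaled {r : ℝ} (hr : 0 < r) {t : ℝ} (ht : 0 < t) :
    Q r t = (1 / r) ^ t *
      (Q 1 t - 2 * Real.log r * L 1 t + Real.log r ^ 2 * Real.Gamma t) := by
  have h1 : HasDerivAt (fun u => (1 / r) ^ u * (L 1 u - Real.log r * Real.Gamma u)) (Q r t) t := by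
    refine (hasDerivAt_L hr ht).congr_of_eventuallyEq ?_
    filter_upwards [Ioi_mem_nhds ht] with u hu
    exact (L_scaled hr hu).symm
  have h2 : HasDerivAt (fun u => (1 / r) ^ u * (L 1 u - Real.log r * Real.Gamma u))
      (-Real.log r * (1 / r) ^ t * (L 1 t - Real.log r * Real.Gamma t) +
        (1 / r) ^ t * (Q 1 t - Real.log r * L 1 t)) t :=
    (const_rpow_hasDerivAt hr t).mul
      ((hasDerivAt_L one_pos ht).sub ((hasDerivAt_Gamma ht).const_mul _))
  have := h1.unique h2
  rw [this]; ring
lemma ae_ne_zero : ∀ᵐ x : ℝ, x ≠ 0 := by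
  have h : (volume : Measure ℝ) {(0:ℝ)} = 0 := Real.volume_singleton
  filter_upwards [measure_eq_zero_iff_ae_notMem.mp h] with x hx
  simpa using hx

lemma gammaMeasure_eq (α β : ℝ) : gammaMeasure α β =
    volume.withDensity (fun x => ((Real.toNNReal (gammaPDFReal α β x) : ℝ≥0) : ℝ≥0∞)) := rfl

lemma gammaMeasure_integral (α β : ℝ) (hα : 0 < α) (hβ : 0 < β) (g : ℝ → ℝ) :
    ∫ x, g x ∂(gammaMeasure α β) = ∫ x in Ioi (0:ℝ), gammaPDFReal α β x * g x := by
  rw [gammaMeasure_eq, integral_withDensity_eq_integral_smul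
    ((measurable_gammaPDFReal α β).real_toNNReal) g]
  rw [← setIntegral_eq_integral_of_ae_compl_eq_zero (s := Ioi (0:ℝ)) ?_]
  · refine setIntegral_congr_fun measurableSet_Ioi fun x hx => ?_
    simp [NNReal.smul_def, Real.coe_toNNReal _ (gammaPDFReal_nonneg hα hβ x)]
  · filter_upwards [ae_ne_zero] with x hx hmem
    have hx0 : x < 0 := lt_of_le_of_ne (not_lt.mp hmem) hx
    simp [gammaPDFReal, if_neg (not_le.mpr hx0)]

end GammaLogAux

open GammaLogAux

/-- For `X ~ Gamma(α, β)`: `E[log X] = ψ(α) − log β`, `Var(log X) = ψ′(α)`, and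
`E[(log X)²] = ψ′(α) + (ψ(α) − log β)²`, where `ψ = (log Γ)′` is the digamma function and
`ψ′ = (log Γ)″` the trigamma function. -/
theorem gamma_log_moments (α β : ℝ) (hα : 0 < α) (hβ : 0 < β) :
    (∫ x, Real.log x ∂(gammaMeasure α β)) =
        deriv (fun t => Real.log (Real.Gamma t)) α - Real.log β ∧
    variance (fun x => Real.log x) (gammaMeasure α β) =
        deriv (deriv (fun t => Real.log (Real.Gamma t))) α ∧
    (∫ x, (Real.log x) ^ 2 ∂(gammaMeasure α β)) =
        deriv (deriv (fun t => Real.log (Real.Gamma t))) α +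
          (deriv (fun t => Real.log (Real.Gamma t)) α - Real.log β) ^ 2 := by
  have hΓpos := Real.Gamma_pos_of_pos hα
  have hβα : (0:ℝ) < β ^ α := Real.rpow_pos_of_pos hβ α
  have hrp : ((1:ℝ) / β) ^ α = 1 / β ^ α := by
    rw [Real.div_rpow zero_le_one hβ.le, Real.one_rpow]
  have hE1 : (∫ x, Real.log x ∂(gammaMeasure α β)) =
      L 1 α / Real.Gamma α - Real.log β := by
    rw [gammaMeasure_integral α β hα hβ]
    rw [setIntegral_congr_fun (g := fun x : ℝ =>
        β ^ α / Real.Gamma α * (x ^ (α - 1) * (Real.log x * Real.exp (-(β * x)))))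
        measurableSet_Ioi
        (fun x hx => by simp only [gammaPDFReal, if_pos (le_of_lt (Set.mem_Ioi.mp hx))]; ring)]
    rw [integral_const_mul]
    rw [show (∫ x in Ioi (0:ℝ), x ^ (α - 1) * (Real.log x * Real.exp (-(β * x)))) =
        L β α from rfl, L_scaled hβ hα, hrp]
    field_simp
  have hE2 : (∫ x, (Real.log x) ^ 2 ∂(gammaMeasure α β)) =
      (Q 1 α - 2 * Real.log β * L 1 α + Real.log β ^ 2 * Real.Gamma α) / Real.Gamma α := by
    rw [gammaMeasure_integral α β hα hβ]
    rw [setIntegral_congr_fun (g := fun x : ℝ =>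
        β ^ α / Real.Gamma α * (x ^ (α - 1) * (Real.log x * (Real.log x * Real.exp (-(β * x))))))
        measurableSet_Ioi
        (fun x hx => by simp only [gammaPDFReal, if_pos (le_of_lt (Set.mem_Ioi.mp hx))]; ring)]
    rw [integral_const_mul]
    rw [show (∫ x in Ioi (0:ℝ),
        x ^ (α - 1) * (Real.log x * (Real.log x * Real.exp (-(β * x))))) =
        Q β α from rfl, Q_scaled hβ hα, hrp]
    field_simp
  have hd1 : deriv (fun t => Real.log (Real.Gamma t)) α = L 1 α / Real.Gamma α :=
    deriv_logGamma hα
  have hd2 : deriv (deriv (fun t => Real.log (Real.Gamma t))) α =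
      (Q 1 α * Real.Gamma α - L 1 α * L 1 α) / Real.Gamma α ^ 2 :=
    deriv2_logGamma hα
  have hP : IsProbabilityMeasure (gammaMeasure α β) := isProbabilityMeasure_gammaMeasure hα hβ
  have hint2 : Integrable (fun x => Real.log x ^ 2) (gammaMeasure α β) := by
    rw [gammaMeasure_eq,
      integrable_withDensity_iff_integrable_smul ((measurable_gammaPDFReal α β).real_toNNReal)]
    rw [← integrableOn_univ, ← Set.Iic_union_Ioi (a := (0:ℝ))]
    refine IntegrableOn.union ?_ ?_
    · refine (integrable_zero _ _ _).congr ?_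
      filter_upwards [ae_restrict_mem measurableSet_Iic, ae_restrict_of_ae ae_ne_zero]
        with x hx hx0
      have hneg : x < 0 := lt_of_le_of_ne hx hx0
      simp [NNReal.smul_def, gammaPDFReal, if_neg (not_le.mpr hneg)]
    · refine (((integrableOn_Q hβ hα).const_mul (β ^ α / Real.Gamma α)).congr ?_ : _)
      filter_upwards [ae_restrict_mem measurableSet_Ioi] with x hx
      rw [NNReal.smul_def, Real.coe_toNNReal _ (gammaPDFReal_nonneg hα hβ x)]
      simp only [smul_eq_mul, gammaPDFReal, if_pos (le_of_lt (Set.mem_Ioi.mp hx))]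
      ring
  have hm : MemLp (fun x => Real.log x) 2 (gammaMeasure α β) :=
    (memLp_two_iff_integrable_sq Real.measurable_log.aestronglyMeasurable).2 hint2
  have hvar : variance (fun x => Real.log x) (gammaMeasure α β) =
      (∫ x, (Real.log x) ^ 2 ∂(gammaMeasure α β)) -
        (∫ x, Real.log x ∂(gammaMeasure α β)) ^ 2 := by
    rw [variance_eq_sub hm]
    congr 1
  refine ⟨by rw [hE1, hd1], ?_, ?_⟩
  · rw [hvar, hE1, hE2, hd2]
    field_simp
    ring
  · rw [hE2, hd1, hd2]
    field_simp
    ring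
end

section
/- Define a real-valued binary decision tree over ℝᵖ inductively: a leaf carries a constant c ∈ ℝ; an internal node carries a split direction v ∈ ℝᵖ, a threshold t ∈ ℝ, and two subtrees. Its hard evaluation at x is: at a leaf, c; at an internal node, the hard evaluation of the first subtree if ⟨v, x⟩ > t and of the second subtree if ⟨v, x⟩ < t. Its soft evaluation at temperature τ > 0 is: at a leaf, c; at an internal node with subtree soft-values L_τ(x), R_τ(x) and score s(x) = ⟨v,x⟩ − t, the blend (e^{τ·s(x)}·L_τ(x) + e^{−τ·s(x)}·R_τ(x))/(e^{τ·s(x)} + e^{−τ·s(x)}). Then for every tree T and every x ∈ ℝᵖ such that ⟨v, x⟩ ≠ t at every internal node of T, the soft evaluation of T at x converges to the hard evaluation of T at x as τ → ∞. -/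
open Filter Topology Matrix

/-- A real-valued binary decision tree over `ℝᵖ`: a leaf carries a constant, an internal
node carries a split direction `v`, a threshold `t`, and two subtrees. -/
inductive DTree (p : ℕ) where
  | leaf (c : ℝ)
  | node (v : Fin p → ℝ) (t : ℝ) (l r : DTree p)

namespace DTree

/-- Hard evaluation: at an internal node take the first subtree if `⟨v, x⟩ > t`,
otherwise the second (the two agree with the informal definition off the boundary). -/
noncomputable def hardEval {p : ℕ} : DTree p → (Fin p → ℝ) → ℝ
  | leaf c, _ => c
  | node v t l r, x => if t < v ⬝ᵥ x then hardEval l x else hardEval r x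

/-- Soft evaluation at temperature `τ`: at an internal node with score `s(x) = ⟨v,x⟩ − t`,
blend the subtree values with weights `e^{τ s(x)}` and `e^{−τ s(x)}`. -/
noncomputable def softEval {p : ℕ} : DTree p → ℝ → (Fin p → ℝ) → ℝ
  | leaf c, _, _ => c
  | node v t l r, τ, x =>
      (Real.exp (τ * (v ⬝ᵥ x - t)) * softEval l τ x +
        Real.exp (-(τ * (v ⬝ᵥ x - t))) * softEval r τ x) /
      (Real.exp (τ * (v ⬝ᵥ x - t)) + Real.exp (-(τ * (v ⬝ᵥ x - t))))

/-- `x` lies off the split boundary of every internal node of the tree. -/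
def OffBoundary {p : ℕ} : DTree p → (Fin p → ℝ) → Prop
  | leaf _, _ => True
  | node v t l r, x => v ⬝ᵥ x ≠ t ∧ OffBoundary l x ∧ OffBoundary r x

end DTree

/-- Decision-tree encoding in the sharp-routing limit: for every binary decision tree `T`
and every input `x` off all split boundaries of `T`, the soft evaluation of `T` at `x`
converges to the hard evaluation of `T` at `x` as `τ → ∞`. -/
theorem softEval_tendsto_hardEval {p : ℕ} (T : DTree p) (x : Fin p → ℝ)
    (hx : DTree.OffBoundary T x) :
    Tendsto (fun τ : ℝ => DTree.softEval T τ x) atTop (𝓝 (DTree.hardEval T x)) := by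
  induction T with
  | leaf c => simpa [DTree.softEval, DTree.hardEval] using tendsto_const_nhds
  | node v t l r ihl ihr =>
    obtain ⟨hne, hl, hr⟩ := hx
    have hs : v ⬝ᵥ x - t ≠ 0 := sub_ne_zero.mpr hne
    have key : ∀ s : ℝ, s ≠ 0 →
        Tendsto (fun τ : ℝ => Real.exp (τ * s) / (Real.exp (τ * s) + Real.exp (-(τ * s))))
          atTop (𝓝 (if 0 < s then 1 else 0)) := by
      intro s hsne
      have hrw : ∀ τ : ℝ, Real.exp (τ * s) / (Real.exp (τ * s) + Real.exp (-(τ * s)))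
          = 1 / (1 + Real.exp (τ * (-2 * s))) := by
        intro τ
        rw [div_eq_div_iff (by positivity) (by positivity)]
        rw [mul_add, mul_add, ← Real.exp_add, mul_one, one_mul]
        ring_nf
      simp only [hrw]
      rcases lt_or_gt_of_ne hsne with hneg | hpos
      · have h2 : Tendsto (fun τ : ℝ => τ * (-2 * s)) atTop atTop :=
          Tendsto.atTop_mul_const (by linarith) tendsto_id
        have := tendsto_atTop_add_const_left atTop 1 (Real.tendsto_exp_atTop.comp h2)
        have := this.inv_tendsto_atTop
        simp only [if_neg (not_lt.mpr hneg.le)]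
        simpa [one_div, Function.comp, Pi.inv_def] using this
      · have h2 : Tendsto (fun τ : ℝ => τ * (-2 * s)) atTop atBot :=
          Tendsto.atTop_mul_const_of_neg (by linarith) tendsto_id
        have := (Real.tendsto_exp_atBot.comp h2).const_add 1
        have h3 : Tendsto (fun τ : ℝ => 1 / (1 + Real.exp (τ * (-2 * s)))) atTop
            (𝓝 (1 / (1 + 0))) := tendsto_const_nhds.div this (by norm_num)
        simp only [if_pos hpos]
        simpa using h3
    set s := v ⬝ᵥ x - t with hsdef
    have hrw : ∀ τ : ℝ,
        (Real.exp (τ * s) * DTree.softEval l τ x +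
          Real.exp (-(τ * s)) * DTree.softEval r τ x) /
          (Real.exp (τ * s) + Real.exp (-(τ * s)))
        = (Real.exp (τ * s) / (Real.exp (τ * s) + Real.exp (-(τ * s)))) * DTree.softEval l τ x
          + (Real.exp (τ * (-s)) / (Real.exp (τ * (-s)) + Real.exp (-(τ * (-s))))) *
            DTree.softEval r τ x := by
      intro τ
      have hd : Real.exp (τ * s) + Real.exp (-(τ * s)) ≠ 0 := by positivity
      field_simp
      ring_nf
    have hL := (key s hs).mul (ihl hl)
    have hR := (key (-s) (neg_ne_zero.mpr hs)).mul (ihr hr)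
    have hsum := hL.add hR
    have hval : (if 0 < s then (1:ℝ) else 0) * DTree.hardEval l x +
        (if 0 < -s then (1:ℝ) else 0) * DTree.hardEval r x
        = if t < v ⬝ᵥ x then DTree.hardEval l x else DTree.hardEval r x := by
      rcases lt_or_gt_of_ne hs with h | h
      · rw [if_neg (not_lt.mpr h.le), if_pos (by linarith), if_neg (by simp [hsdef] at h ⊢; linarith)]
        ring
      · rw [if_pos h, if_neg (by simp; linarith), if_pos (by simp [hsdef] at h ⊢; linarith)]
        ring
    simp only [DTree.softEval, DTree.hardEval, ← hsdef]
    rw [← hval]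
    exact hsum.congr fun τ => (hrw τ).symm
end
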